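/- Let (Γ, I) be an independence alphabet and η : M(Γ, I) → Q an embedding into the queue monoid. Then the graph (Γ, I) contains no induced path P₄, i.e., there are no four distinct letters a, b, c, d with (a,b), (b,c), (c,d) ∈ I and (a,c), (b,d), (a,d) ∉ I. -/

import Mathlib

def qstep (A : Type) [DecidableEq A] : Option (List A) → A ⊕ A → Option (List A)
  | none, _ => none
  | some q, Sum.inl a => some (q ++ [a])
  | some q, Sum.inr a =>
      match q with
      | [] => none
      | b :: q' => if b = a then some q' else none

def qact (A : Type) [DecidableEq A] (q : Option (List A)) (u : List (A ⊕ A)) :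
    Option (List A) :=
  u.foldl (qstep A) q

def QEquiv (A : Type) [DecidableEq A] (u v : List (A ⊕ A)) : Prop :=
  ∀ q : Option (List A), qact A q u = qact A q v

/-- The congruence on the free monoid of queue actions identifying sequences with the
same effect on every queue state. -/
def queueCon (A : Type) [DecidableEq A] : Con (FreeMonoid (A ⊕ A)) where
  r u v := QEquiv A u.toList v.toList
  iseqv := ⟨fun _ _ => rfl, fun h q => (h q).symm, fun h1 h2 q => (h1 q).trans (h2 q)⟩
  mul' := by
    intro u v u' v' hu hv q
    have h1 := hu q
    have h2 := hv (qact A q v.toList)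
    show qact A q (u * u').toList = qact A q (v * v').toList
    rw [FreeMonoid.toList_mul, FreeMonoid.toList_mul]
    unfold qact at h1 h2 ⊢
    rw [List.foldl_append, List.foldl_append, h1, h2]

/-- The queue monoid over the alphabet `A`. -/
abbrev QueueMonoid (A : Type) [DecidableEq A] := (queueCon A).Quotient

/-- The congruence on the free monoid generated by `ab = ba` for independent `(a,b)`. -/
def traceCon {Γ : Type} (I : Γ → Γ → Prop) : Con (FreeMonoid Γ) :=
  conGen fun u v => ∃ a b : Γ, I a b ∧
    u = FreeMonoid.of a * FreeMonoid.of b ∧ v = FreeMonoid.of b * FreeMonoid.of a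

/-- The trace monoid of the independence alphabet `(Γ, I)`. -/
abbrev TraceMonoid {Γ : Type} (I : Γ → Γ → Prop) := (traceCon I).Quotient

/-- Positive projection: erase all read actions. -/
def ppr {A : Type} (u : List (A ⊕ A)) : List A :=
  u.filterMap (Sum.elim some fun _ => none)

/-- Negative projection: erase all write actions (mapping ā to a). -/
def npr {A : Type} (u : List (A ⊕ A)) : List A :=
  u.filterMap (Sum.elim (fun _ => none) some)

/-- `a ∈ Γ₊`: some (equivalently, every) representative of `η(a)` has nonempty positive
projection and empty negative projection. -/
def GammaPlus {Γ A : Type} [DecidableEq A] (I : Γ → Γ → Prop)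
    (η : TraceMonoid I →* QueueMonoid A) (a : Γ) : Prop :=
  ∃ w : List (A ⊕ A),
    (queueCon A).mk' (FreeMonoid.ofList w) = η ((traceCon I).mk' (FreeMonoid.of a)) ∧
    ppr w ≠ [] ∧ npr w = []

/-- `a ∈ Γ₋`: some representative of `η(a)` has empty positive projection and nonempty
negative projection. -/
def GammaMinus {Γ A : Type} [DecidableEq A] (I : Γ → Γ → Prop)
    (η : TraceMonoid I →* QueueMonoid A) (a : Γ) : Prop :=
  ∃ w : List (A ⊕ A),
    (queueCon A).mk' (FreeMonoid.ofList w) = η ((traceCon I).mk' (FreeMonoid.of a)) ∧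
    ppr w = [] ∧ npr w ≠ []

/-- `a ∈ Γ±`: some representative of `η(a)` has both projections nonempty. -/
def GammaPM {Γ A : Type} [DecidableEq A] (I : Γ → Γ → Prop)
    (η : TraceMonoid I →* QueueMonoid A) (a : Γ) : Prop :=
  ∃ w : List (A ⊕ A),
    (queueCon A).mk' (FreeMonoid.ofList w) = η ((traceCon I).mk' (FreeMonoid.of a)) ∧
    ppr w ≠ [] ∧ npr w ≠ []

set_option linter.unusedSectionVars false

namespace QInfra


variable {A : Type} [DecidableEq A]

def kd : List (A ⊕ A) → ℕ
  | [] => 0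
  | (Sum.inl _) :: w => kd w - 1
  | (Sum.inr _) :: w => kd w + 1

@[simp] lemma ppr_nil : ppr ([] : List (A ⊕ A)) = [] := rfl
@[simp] lemma npr_nil : npr ([] : List (A ⊕ A)) = [] := rfl
@[simp] lemma ppr_cons_inl (a : A) (w : List (A ⊕ A)) : ppr (Sum.inl a :: w) = a :: ppr w := rfl
@[simp] lemma ppr_cons_inr (a : A) (w : List (A ⊕ A)) : ppr (Sum.inr a :: w) = ppr w := rfl
@[simp] lemma npr_cons_inl (a : A) (w : List (A ⊕ A)) : npr (Sum.inl a :: w) = npr w := rfl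
@[simp] lemma npr_cons_inr (a : A) (w : List (A ⊕ A)) : npr (Sum.inr a :: w) = a :: npr w := rfl
@[simp] lemma ppr_append (w w' : List (A ⊕ A)) : ppr (w ++ w') = ppr w ++ ppr w' :=
  List.filterMap_append ..
@[simp] lemma npr_append (w w' : List (A ⊕ A)) : npr (w ++ w') = npr w ++ npr w' :=
  List.filterMap_append ..

lemma kd_le (w : List (A ⊕ A)) : kd w ≤ (npr w).length := by
  induction w with
  | nil => simp [kd]
  | cons x w ih =>
    cases x with
    | inl a => simp only [kd, ppr_cons_inl, npr_cons_inl]; omega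
    | inr a => simp only [kd, npr_cons_inr, List.length_cons]; omega

lemma kd_ge (w : List (A ⊕ A)) : (npr w).length ≤ kd w + (ppr w).length := by
  induction w with
  | nil => simp [kd]
  | cons x w ih =>
    cases x with
    | inl a => simp only [kd, ppr_cons_inl, npr_cons_inl, List.length_cons]; omega
    | inr a => simp only [kd, npr_cons_inr, ppr_cons_inr, List.length_cons]; omega

lemma kd_append (w w' : List (A ⊕ A)) :
    kd (w ++ w') = max (kd w) ((kd w' + (npr w).length) - (ppr w).length) := by
  induction w with
  | nil => simp [kd]
  | cons x w ih =>
    cases x with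
    | inl a =>
      show kd (w ++ w') - 1 = max (kd w - 1) _
      rw [ih]
      simp only [ppr_cons_inl, npr_cons_inl, List.length_cons]
      omega
    | inr a =>
      show kd (w ++ w') + 1 = max (kd w + 1) _
      rw [ih]
      simp only [ppr_cons_inr, npr_cons_inr, List.length_cons]
      omega

@[simp] lemma qact_none (w : List (A ⊕ A)) : qact A none w = none := by
  induction w with
  | nil => rfl
  | cons x w ih => simpa [qact, qstep] using ih

lemma qact_cons (q : Option (List A)) (x : A ⊕ A) (w : List (A ⊕ A)) :
    qact A q (x :: w) = qact A (qstep A q x) w := rfl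

lemma qact_append (q : Option (List A)) (w w' : List (A ⊕ A)) :
    qact A q (w ++ w') = qact A (qact A q w) w' := by
  simp [qact, List.foldl_append]

/-- The fundamental evaluation lemma. -/
theorem qact_eval (w : List (A ⊕ A)) (q : List A) :
    qact A (some q) w =
      if npr w <+: q ++ ppr w ∧ kd w ≤ q.length then
        some ((q ++ ppr w).drop (npr w).length)
      else none := by
  induction w generalizing q with
  | nil => simp [qact, kd]
  | cons x w ih =>
    cases x with
    | inl a =>
      rw [qact_cons]
      show qact A (some (q ++ [a])) w = _
      rw [ih]
      simp only [ppr_cons_inl, npr_cons_inl, kd, List.append_assoc, List.singleton_append,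
        List.length_append, List.length_cons, List.length_nil]
      congr 1
      exact propext ⟨fun ⟨h1, h2⟩ => ⟨h1, by omega⟩, fun ⟨h1, h2⟩ => ⟨h1, by omega⟩⟩
    | inr a =>
      rw [qact_cons]
      cases q with
      | nil =>
        show qact A none w = _
        rw [qact_none, if_neg]
        simp only [kd, List.length_nil]
        rintro ⟨-, h2⟩; omega
      | cons b q' =>
        show qact A (if b = a then some q' else none) w = _
        by_cases hba : b = a
        · subst hba
          rw [if_pos rfl, ih]
          simp only [npr_cons_inr, kd, ppr_cons_inr, List.cons_append, List.length_cons,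
            List.prefix_cons_inj, List.drop_succ_cons]
          congr 1
          exact propext ⟨fun ⟨h1, h2⟩ => ⟨h1, by omega⟩, fun ⟨h1, h2⟩ => ⟨h1, by omega⟩⟩
        · rw [if_neg hba, qact_none, if_neg]
          rintro ⟨h1, -⟩
          simp only [npr_cons_inr, List.cons_append] at h1
          rcases h1 with ⟨t, ht⟩
          simp only [List.cons_append] at ht
          injection ht with h1 h2
          exact hba h1.symm


lemma prefix_drop_of_prefix {v q u : List A} (h : v <+: q ++ u) :
    v.drop q.length <+: u := by
  rcases h with ⟨t, ht⟩
  rcases le_or_gt v.length q.length with hle | hlt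
  · simp [List.drop_eq_nil_of_le hle]
  · have := congrArg (List.drop q.length) ht
    rw [List.drop_append_of_le_length (by omega), List.drop_left' rfl] at this
    exact ⟨t, this⟩

lemma prefix_of_drop_prefix {v u : List A} (j : ℕ) (h : v.drop j <+: u) :
    v <+: v.take j ++ u := by
  conv_lhs => rw [← List.take_append_drop j v]
  exact (List.prefix_append_right_inj _).mpr h

/-- Sufficient condition for queue equivalence. -/
theorem qequiv_of {w w' : List (A ⊕ A)} (hu : ppr w = ppr w') (hv : npr w = npr w')
    (hk : ∀ j, (npr w).drop j <+: ppr w → (kd w ≤ j ↔ kd w' ≤ j)) :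
    QEquiv A w w' := by
  intro q
  cases q with
  | none => simp
  | some q =>
    rw [qact_eval, qact_eval, ← hu, ← hv]
    by_cases hp : npr w <+: q ++ ppr w
    · have hiff := hk q.length (prefix_drop_of_prefix hp)
      by_cases hkk : kd w ≤ q.length
      · rw [if_pos ⟨hp, hkk⟩, if_pos ⟨hp, hiff.mp hkk⟩]
      · rw [if_neg (fun hh => hkk hh.2), if_neg (fun hh => hkk (hiff.mpr hh.2))]
    · rw [if_neg (fun hh => hp hh.1), if_neg (fun hh => hp hh.1)]

/-- Extraction of the commutation criterion from queue equivalence. -/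
theorem comm_facts {w w' : List (A ⊕ A)} (h : QEquiv A (w ++ w') (w' ++ w)) :
    ppr (w' ++ w) = ppr (w ++ w') ∧ npr (w' ++ w) = npr (w ++ w') ∧
      ∀ j, (npr (w ++ w')).drop j <+: ppr (w ++ w') →
        (kd (w ++ w') ≤ j ↔ kd (w' ++ w) ≤ j) := by
  have hlen : (npr (w' ++ w)).length = (npr (w ++ w')).length := by
    simp only [npr_append, List.length_append]; omega
  have h0 := h (some (npr (w ++ w')))
  rw [qact_eval, qact_eval, if_pos ⟨List.prefix_append _ _, kd_le _⟩, List.drop_left] at h0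
  by_cases hc : npr (w' ++ w) <+: npr (w ++ w') ++ ppr (w' ++ w) ∧
      kd (w' ++ w) ≤ (npr (w ++ w')).length
  · rw [if_pos hc] at h0
    have hv : npr (w' ++ w) = npr (w ++ w') := by
      have := List.prefix_iff_eq_take.mp hc.1
      rwa [hlen, List.take_left] at this
    have hu : ppr (w' ++ w) = ppr (w ++ w') := by
      have h0' := Option.some.inj h0
      rwa [hlen, List.drop_left, eq_comm] at h0'
    refine ⟨hu, hv, ?_⟩
    intro j hov
    rcases le_or_gt (npr (w ++ w')).length j with hj | hj
    · constructor <;> intro _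
      · exact le_trans (le_trans (kd_le _) (le_of_eq hlen)) hj
      · exact le_trans (kd_le _) hj
    · have hq : ((npr (w ++ w')).take j).length = j := by
        rw [List.length_take]; omega
      have h1 := h (some ((npr (w ++ w')).take j))
      rw [qact_eval, qact_eval] at h1
      have hp1 : npr (w ++ w') <+: (npr (w ++ w')).take j ++ ppr (w ++ w') :=
        prefix_of_drop_prefix j hov
      have hp2 : npr (w' ++ w) <+: (npr (w ++ w')).take j ++ ppr (w' ++ w) := by
        rw [hv, hu]; exact hp1
      have e1 : kd (w ++ w') ≤ j →
          (if npr (w ++ w') <+: (npr (w ++ w')).take j ++ ppr (w ++ w') ∧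
              kd (w ++ w') ≤ ((npr (w ++ w')).take j).length then
            some ((((npr (w ++ w')).take j) ++ ppr (w ++ w')).drop (npr (w ++ w')).length)
          else none) = some ((((npr (w ++ w')).take j) ++ ppr (w ++ w')).drop (npr (w ++ w')).length) :=
        fun hk => if_pos ⟨hp1, by rw [hq]; exact hk⟩
      have n1 : ¬ kd (w ++ w') ≤ j →
          (if npr (w ++ w') <+: (npr (w ++ w')).take j ++ ppr (w ++ w') ∧
              kd (w ++ w') ≤ ((npr (w ++ w')).take j).length then
            some ((((npr (w ++ w')).take j) ++ ppr (w ++ w')).drop (npr (w ++ w')).length)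
          else none) = none :=
        fun hk => if_neg (fun hh => hk (by rw [← hq]; exact hh.2))
      have e2 : kd (w' ++ w) ≤ j →
          (if npr (w' ++ w) <+: (npr (w ++ w')).take j ++ ppr (w' ++ w) ∧
              kd (w' ++ w) ≤ ((npr (w ++ w')).take j).length then
            some ((((npr (w ++ w')).take j) ++ ppr (w' ++ w)).drop (npr (w' ++ w)).length)
          else none) = some ((((npr (w ++ w')).take j) ++ ppr (w' ++ w)).drop (npr (w' ++ w)).length) :=
        fun hk => if_pos ⟨hp2, by rw [hq]; exact hk⟩
      have n2 : ¬ kd (w' ++ w) ≤ j →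
          (if npr (w' ++ w) <+: (npr (w ++ w')).take j ++ ppr (w' ++ w) ∧
              kd (w' ++ w) ≤ ((npr (w ++ w')).take j).length then
            some ((((npr (w ++ w')).take j) ++ ppr (w' ++ w)).drop (npr (w' ++ w)).length)
          else none) = none :=
        fun hk => if_neg (fun hh => hk (by rw [← hq]; exact hh.2))
      constructor
      · intro hk1
        by_contra hk2
        rw [e1 hk1, n2 hk2] at h1
        cases h1
      · intro hk2
        by_contra hk1
        rw [n1 hk1, e2 hk2] at h1
        cases h1
  · rw [if_neg hc] at h0
    cases h0

/-! ### words: powers and commutation -/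

def pw {α : Type} : ℕ → List α → List α
  | 0, _ => []
  | n+1, w => w ++ pw n w

@[simp] lemma pw_zero {α : Type} (w : List α) : pw 0 w = [] := rfl
lemma pw_succ {α : Type} (n : ℕ) (w : List α) : pw (n+1) w = w ++ pw n w := rfl
@[simp] lemma pw_one {α : Type} (w : List α) : pw 1 w = w := by simp [pw]

@[simp] lemma pw_length {α : Type} (n : ℕ) (w : List α) : (pw n w).length = n * w.length := by
  induction n with
  | zero => simp
  | succ n ih => simp [pw_succ, ih]; ring

lemma pw_add {α : Type} (a b : ℕ) (w : List α) : pw (a + b) w = pw a w ++ pw b w := by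
  induction a with
  | zero => simp
  | succ a ih => rw [Nat.succ_add, pw_succ, ih, pw_succ, List.append_assoc]

lemma pw_succ' {α : Type} (n : ℕ) (w : List α) : pw (n+1) w = pw n w ++ w := by
  rw [pw_add, pw_one]

@[simp] lemma ppr_pw (n : ℕ) (w : List (A ⊕ A)) : ppr (pw n w) = pw n (ppr w) := by
  induction n with
  | zero => simp
  | succ n ih => simp [pw_succ, ih]

@[simp] lemma npr_pw (n : ℕ) (w : List (A ⊕ A)) : npr (pw n w) = pw n (npr w) := by
  induction n with
  | zero => simp
  | succ n ih => simp [pw_succ, ih]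

lemma comm_pw_right {α : Type} {X Y : List α} (h : X ++ Y = Y ++ X) (m : ℕ) :
    X ++ pw m Y = pw m Y ++ X := by
  induction m with
  | zero => simp
  | succ m ih => rw [pw_succ, ← List.append_assoc, h, List.append_assoc, ih, List.append_assoc]

lemma comm_pw {α : Type} {X Y : List α} (h : X ++ Y = Y ++ X) (n m : ℕ) :
    pw n X ++ pw m Y = pw m Y ++ pw n X := by
  induction n with
  | zero => simp
  | succ n ih =>
    rw [pw_succ, List.append_assoc, ih, ← List.append_assoc, comm_pw_right h m,
      List.append_assoc]

lemma pw_pw {α : Type} (n m : ℕ) (w : List α) : pw n (pw m w) = pw (n * m) w := by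
  induction n with
  | zero => simp
  | succ n ih => rw [pw_succ, ih, Nat.succ_mul, Nat.add_comm (n*m) m, pw_add]

lemma comm_take {α : Type} {X Y : List α} (h : X ++ Y = Y ++ X) {t : ℕ}
    (h1 : t ≤ X.length) (h2 : t ≤ Y.length) : X.take t = Y.take t := by
  have := congrArg (List.take t) h
  rwa [List.take_append_of_le_length h1, List.take_append_of_le_length h2] at this

lemma comm_suffix {α : Type} {X Y : List α} (h : X ++ Y = Y ++ X) {t : ℕ}
    (h1 : t ≤ X.length) (h2 : t ≤ Y.length) :
    X.drop (X.length - t) = Y.drop (Y.length - t) := by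
  have e : X.length + (Y.length - t) = Y.length + (X.length - t) := by omega
  have h3 := congrArg (List.drop (X.length + (Y.length - t))) h
  rw [List.drop_length_add_append] at h3
  rw [e, List.drop_length_add_append] at h3
  exact h3.symm

/-- Transitivity of commutation through a nonempty word. -/
theorem comm_trans {α : Type} : ∀ N (X Y Z : List α), X.length + Y.length ≤ N → Z ≠ [] →
    X ++ Z = Z ++ X → Y ++ Z = Z ++ Y → X ++ Y = Y ++ X := by
  intro N
  induction N with
  | zero =>
    intro X Y Z hN _ _ _
    have : X = [] := List.eq_nil_of_length_eq_zero (by omega)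
    subst this; simp
  | succ N ih =>
    have key : ∀ X Y Z : List α, X.length + Y.length ≤ N + 1 → X.length ≤ Y.length →
        Z ≠ [] → X ++ Z = Z ++ X → Y ++ Z = Z ++ Y → X ++ Y = Y ++ X := by
      intro X Y Z hN hle hZ hXZ hYZ
      by_cases hX0 : X = []
      · subst hX0; simp
      have hXlen : 1 ≤ X.length := by
        cases X with | nil => simp at hX0 | cons a l => simp
      have hZlen : 1 ≤ Z.length := by
        cases Z with | nil => simp at hZ | cons a l => simp
      have hXP : X ++ pw Y.length Z = pw Y.length Z ++ X := comm_pw_right hXZ _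
      have hYP : Y ++ pw Y.length Z = pw Y.length Z ++ Y := comm_pw_right hYZ _
      have hXtake : X = (pw Y.length Z).take X.length := by
        have := comm_take hXP (t := X.length) le_rfl
          (by rw [pw_length]; nlinarith [hZlen, hle])
        rwa [List.take_length] at this
      have hYtake : Y = (pw Y.length Z).take Y.length := by
        have := comm_take hYP (t := Y.length) le_rfl
          (by rw [pw_length]; nlinarith [hZlen])
        rwa [List.take_length] at this
      have hXY : X = Y.take X.length := by
        rw [hYtake, List.take_take, min_eq_left hle, ← hXtake]
      set R := Y.drop X.length with hR
      have hYXR : Y = X ++ R := by rw [hXY, hR, List.take_append_drop]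
      have hRZ : R ++ Z = Z ++ R := by
        have h1 : X ++ (R ++ Z) = X ++ (Z ++ R) := by
          have := hYZ
          rw [hYXR] at this
          calc X ++ (R ++ Z) = (X ++ R) ++ Z := by rw [List.append_assoc]
            _ = Z ++ (X ++ R) := this
            _ = (Z ++ X) ++ R := by rw [List.append_assoc]
            _ = (X ++ Z) ++ R := by rw [hXZ]
            _ = X ++ (Z ++ R) := by rw [List.append_assoc]
        exact List.append_cancel_left h1
      have hlR : R.length = Y.length - X.length := by rw [hR, List.length_drop]
      have hXR : X ++ R = R ++ X := ih X R Z (by omega) hZ hXZ hRZ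
      rw [hYXR, List.append_assoc, ← hXR]
    intro X Y Z hN hZ hXZ hYZ
    rcases le_or_gt X.length Y.length with hle | hlt
    · exact key X Y Z hN hle hZ hXZ hYZ
    · exact (key Y X Z (by omega) (by omega) hZ hYZ hXZ).symm


/-- Two words of equal length commuting with a common nonempty word are equal. -/
lemma eqlen_comm {α : Type} {X Y Z : List α} (hZ : Z ≠ []) (hX : X ++ Z = Z ++ X)
    (hY : Y ++ Z = Z ++ Y) (hlen : X.length = Y.length) : X = Y := by
  have hZlen : 1 ≤ Z.length := by
    cases Z with | nil => simp at hZ | cons a l => simp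
  have key : ∀ W : List α, W ++ Z = Z ++ W → W.length ≤ X.length →
      W = (pw X.length Z).take W.length := by
    intro W hW hWlen
    have hWP : W ++ pw X.length Z = pw X.length Z ++ W := comm_pw_right hW _
    have := congrArg (List.take W.length) hWP
    rwa [List.take_left' rfl, List.take_append_of_le_length
      (by rw [pw_length]; nlinarith)] at this
  rw [key X hX le_rfl, key Y hY hlen.ge, hlen]

lemma comm_pw_left {α : Type} {X Z : List α} (h : X ++ Z = Z ++ X) (n : ℕ) :
    pw n X ++ Z = Z ++ pw n X := by
  have := comm_pw h n 1
  rwa [pw_one] at this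

lemma kd_pw {R : ℕ} (hR : 1 ≤ R) (z : List (A ⊕ A)) :
    kd (pw R z) = kd z + (R - 1) * ((npr z).length - (ppr z).length) := by
  induction R with
  | zero => omega
  | succ R ih =>
    rcases Nat.eq_or_lt_of_le hR with h1 | h2
    · simp [← h1]
    · have hR' : 1 ≤ R := by omega
      have hIH := ih hR'
      rw [pw_succ, kd_append, hIH]
      have h1 := kd_le z
      have h2 := kd_ge z
      rcases le_or_gt (npr z).length (ppr z).length with hle | hlt
      · have h3 : (npr z).length - (ppr z).length = 0 := by omega
        rw [h3, Nat.mul_zero, Nat.mul_zero]; omega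
      · have hmul : (R + 1 - 1) * ((npr z).length - (ppr z).length)
            = (R - 1) * ((npr z).length - (ppr z).length) + ((npr z).length - (ppr z).length) := by
          rw [show R + 1 - 1 = (R - 1) + 1 from by omega, Nat.succ_mul]
        rw [hmul]; omega

lemma pw_nil {α : Type} (R : ℕ) : pw R ([] : List α) = [] := by
  induction R with
  | zero => rfl
  | succ n ih => simp [pw_succ, ih]

lemma kd_pw_writer {z : List (A ⊕ A)} (hz : npr z = []) (R : ℕ) : kd (pw R z) = 0 := by
  have h := kd_le (pw R z)
  rw [npr_pw, hz, pw_nil] at h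
  simpa using h

/-- Left padding with a strict writer equalizes thresholds. -/
lemma padL {z : List (A ⊕ A)} (hz : (npr z).length < (ppr z).length)
    {R : ℕ} (W : List (A ⊕ A)) (hR : 1 ≤ R) (hRW : kd W ≤ R) :
    kd (pw R z ++ W) = kd z := by
  rw [kd_append, kd_pw hR, npr_pw, ppr_pw, pw_length, pw_length]
  have h1 := kd_le z
  have : (npr z).length - (ppr z).length = 0 := by omega
  rw [this]
  have hle : R * (npr z).length + R ≤ R * (ppr z).length := by nlinarith
  omega

/-- Right padding with a strict reader equalizes thresholds. -/
lemma padR {z : List (A ⊕ A)} (hz : (ppr z).length < (npr z).length)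
    {R : ℕ} (W : List (A ⊕ A)) (hR : 1 ≤ R) (hRW : kd W + (ppr W).length + 1 ≤ R) :
    kd (W ++ pw R z) = (kd (pw R z) + (npr W).length) - (ppr W).length := by
  rw [kd_append]
  have h2 := kd_ge z
  have hgrow : R - 1 ≤ kd (pw R z) := by
    rw [kd_pw hR]
    have : 1 ≤ (npr z).length - (ppr z).length := by omega
    nlinarith
  omega




section Bridge

variable {Γ A : Type} [DecidableEq A] {I : Γ → Γ → Prop}

def mkq (w : List (A ⊕ A)) : QueueMonoid A := (queueCon A).mk' (FreeMonoid.ofList w)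

lemma mkq_append (w w' : List (A ⊕ A)) : mkq (w ++ w') = mkq w * mkq w' := by
  unfold mkq
  rw [← map_mul]
  rfl

lemma mkq_eq_iff {w w' : List (A ⊕ A)} : mkq w = mkq w' ↔ QEquiv A w w' := by
  unfold mkq
  change ((FreeMonoid.ofList w : FreeMonoid (A ⊕ A)) : (queueCon A).Quotient)
    = ((FreeMonoid.ofList w' : FreeMonoid (A ⊕ A)) : (queueCon A).Quotient) ↔ _
  rw [Con.eq]
  show QEquiv A (FreeMonoid.ofList w).toList (FreeMonoid.ofList w').toList ↔ _
  rw [FreeMonoid.toList_ofList, FreeMonoid.toList_ofList]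

lemma mkq_pw (n : ℕ) (w : List (A ⊕ A)) : mkq (pw n w) = (mkq w) ^ n := by
  induction n with
  | zero => simp [pw, pow_zero]; rfl
  | succ n ih => rw [pw_succ, mkq_append, ih, ← pow_succ']

def mkt (I : Γ → Γ → Prop) (x : Γ) : TraceMonoid I := (traceCon I).mk' (FreeMonoid.of x)

lemma edge_trace_comm (x y : Γ) (hxy : I x y) :
    mkt I x * mkt I y = mkt I y * mkt I x := by
  unfold mkt
  rw [← map_mul, ← map_mul]
  change ((FreeMonoid.of x * FreeMonoid.of y : FreeMonoid Γ) : (traceCon I).Quotient)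
    = ((FreeMonoid.of y * FreeMonoid.of x : FreeMonoid Γ) : (traceCon I).Quotient)
  rw [Con.eq]
  exact ConGen.Rel.of _ _ ⟨x, y, hxy, rfl, rfl⟩

/-- Queue equivalence of concatenated representative words, from an edge. -/
lemma edge_qequiv (η : TraceMonoid I →* QueueMonoid A) {x y : Γ} (hxy : I x y)
    {wx wy : List (A ⊕ A)} (hwx : mkq wx = η (mkt I x)) (hwy : mkq wy = η (mkt I y)) :
    QEquiv A (wx ++ wy) (wy ++ wx) := by
  rw [← mkq_eq_iff, mkq_append, mkq_append, hwx, hwy, ← map_mul, ← map_mul,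
    edge_trace_comm x y hxy]

open scoped Classical in
/-- The pair projection homomorphism on the free monoid. -/
noncomputable def projF (x y : Γ) : FreeMonoid Γ →* FreeMonoid Bool where
  toFun w := FreeMonoid.ofList ((FreeMonoid.toList w).filterMap
    (fun z => if z = x then some true else if z = y then some false else none))
  map_one' := rfl
  map_mul' := by
    intro u v
    show FreeMonoid.ofList _ = FreeMonoid.ofList _ * FreeMonoid.ofList _
    rw [FreeMonoid.toList_mul, List.filterMap_append]
    rfl

open scoped Classical in
lemma projF_of (x y z : Γ) :
    projF x y (FreeMonoid.of z) = FreeMonoid.ofList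
      (if z = x then [true] else if z = y then [false] else []) := by
  simp only [projF, MonoidHom.coe_mk, OneHom.coe_mk]
  show FreeMonoid.ofList (List.filterMap _ (FreeMonoid.toList (FreeMonoid.of z))) = _
  rw [FreeMonoid.toList_of]
  by_cases h1 : z = x
  · simp [List.filterMap_cons, h1]
  · by_cases h2 : z = y
    · have h3 : ¬ y = x := by rw [← h2]; exact h1
      simp [List.filterMap_cons, h1, h2, h3]
    · simp [List.filterMap_cons, h1, h2]

open scoped Classical in
lemma proj_resp (hirr : ∀ a, ¬ I a a) (hsym : ∀ a b, I a b → I b a)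
    {x y : Γ} (hnI : ¬ I x y) :
    traceCon I ≤ Con.ker (projF x y) := by
  apply Con.conGen_le.mpr
  rintro u v ⟨g, g', hI, rfl, rfl⟩
  show projF x y _ = projF x y _
  rw [map_mul, map_mul, projF_of, projF_of]
  by_cases hgx : g = x
  · by_cases hg'x : g' = x
    · rw [hgx, hg'x] at hI; exact absurd hI (hirr x)
    · have hg'y : g' ≠ y := by
        intro h; rw [hgx, h] at hI; exact hnI hI
      rw [if_neg hg'x, if_neg hg'y]
      simp
  · by_cases hgy : g = y
    · have hg'x : g' ≠ x := by
        intro h; rw [hgy, h] at hI; exact hnI (hsym _ _ hI)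
      have hg'y : g' ≠ y := by
        intro h; rw [hgy, h] at hI; exact absurd hI (hirr y)
      rw [if_neg hg'x, if_neg hg'y]
      simp
    · rw [if_neg hgx, if_neg hgy]
      simp

/-- The projection homomorphism on the trace monoid. -/
noncomputable def projT (hirr : ∀ a, ¬ I a a) (hsym : ∀ a b, I a b → I b a)
    {x y : Γ} (hnI : ¬ I x y) : TraceMonoid I →* FreeMonoid Bool :=
  Con.lift _ (projF x y) (proj_resp hirr hsym hnI)

lemma projT_mk (hirr : ∀ a, ¬ I a a) (hsym : ∀ a b, I a b → I b a)
    {x y : Γ} (hnI : ¬ I x y) (w : FreeMonoid Γ) :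
    projT hirr hsym hnI ((traceCon I).mk' w) = projF x y w := by
  unfold projT
  rw [Con.lift_mk']

open scoped Classical in
lemma projT_mkt (hirr : ∀ a, ¬ I a a) (hsym : ∀ a b, I a b → I b a)
    {x y : Γ} (hnI : ¬ I x y) (z : Γ) :
    projT hirr hsym hnI (mkt I z) = FreeMonoid.ofList
      (if z = x then [true] else if z = y then [false] else []) := by
  unfold mkt
  rw [projT_mk, projF_of]

end Bridge


section Cases

variable {Γ A : Type} [DecidableEq A] {I : Γ → Γ → Prop}

lemma toList_pow (P : FreeMonoid Bool) (n : ℕ) :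
    FreeMonoid.toList (P ^ n) = pw n (FreeMonoid.toList P) := by
  induction n with
  | zero => simp [pw]
  | succ n ih => rw [pow_succ, FreeMonoid.toList_mul, ih, pw_succ']

lemma collision (η : TraceMonoid I →* QueueMonoid A) (hη : Function.Injective η)
    {T₁ T₂ : TraceMonoid I} {W₁ W₂ : List (A ⊕ A)}
    (h₁ : mkq W₁ = η T₁) (h₂ : mkq W₂ = η T₂) (hQ : QEquiv A W₁ W₂) (hT : T₁ ≠ T₂) :
    False := by
  apply hT
  apply hη
  rw [← h₁, ← h₂]
  exact mkq_eq_iff.mpr hQ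

lemma trace_ne_swap (hirr : ∀ a, ¬ I a a) (hsym : ∀ a b, I a b → I b a)
    {x y : Γ} (hxy : x ≠ y) (hnI : ¬ I x y) (P Q : TraceMonoid I) :
    P * (mkt I x * mkt I y) * Q ≠ P * (mkt I y * mkt I x) * Q := by
  intro h
  have h2 := congrArg (fun T => FreeMonoid.toList (projT hirr hsym hnI T)) h
  simp only [map_mul] at h2
  rw [projT_mkt hirr hsym hnI x, projT_mkt hirr hsym hnI y] at h2
  rw [if_pos rfl, if_neg (Ne.symm hxy), if_pos rfl] at h2
  simp only [FreeMonoid.toList_mul, FreeMonoid.toList_ofList, List.append_assoc,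
    List.singleton_append] at h2
  exact absurd (List.append_cancel_left h2) (by simp)

/-- The swap collision: if the projections of two non-adjacent letters commute,
we get a contradiction, using a padding word to equalize thresholds. -/
lemma case_swap (η : TraceMonoid I →* QueueMonoid A) (hη : Function.Injective η)
    (hirr : ∀ a, ¬ I a a) (hsym : ∀ a b, I a b → I b a)
    {x y : Γ} (hxy : x ≠ y) (hnI : ¬ I x y)
    {wx wy : List (A ⊕ A)} (hwx : mkq wx = η (mkt I x)) (hwy : mkq wy = η (mkt I y))
    (hu : ppr wx ++ ppr wy = ppr wy ++ ppr wx) (hv : npr wx ++ npr wy = npr wy ++ npr wx)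
    (hpad : (∃ (z : List (A ⊕ A)) (ζ : TraceMonoid I), mkq z = η ζ ∧
      (npr z).length ≠ (ppr z).length) ∨ kd (wx ++ wy) = kd (wy ++ wx)) :
    False := by
  have hu' : ppr (wx ++ wy) = ppr (wy ++ wx) := by
    rw [ppr_append, ppr_append]; exact hu
  have hv' : npr (wx ++ wy) = npr (wy ++ wx) := by
    rw [npr_append, npr_append]; exact hv
  rcases hpad with ⟨z, ζ, hz, hzne⟩ | heq
  · rcases Nat.lt_or_ge (npr z).length (ppr z).length with hzl | hzr
    · -- left padding
      set R := kd (wx ++ wy) + kd (wy ++ wx) + 1 with hR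
      have hk₁ : kd (pw R z ++ (wx ++ wy)) = kd z := padL hzl _ (by omega) (by omega)
      have hk₂ : kd (pw R z ++ (wy ++ wx)) = kd z := padL hzl _ (by omega) (by omega)
      have hQ : QEquiv A (pw R z ++ (wx ++ wy)) (pw R z ++ (wy ++ wx)) := by
        apply qequiv_of
        · simp only [ppr_append]; rw [hu]
        · simp only [npr_append]; rw [hv]
        · intro j _; rw [hk₁, hk₂]
      refine collision η hη ?_ ?_ hQ ?_
        (T₁ := ζ ^ R * (mkt I x * mkt I y) * 1) (T₂ := ζ ^ R * (mkt I y * mkt I x) * 1)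
      · rw [mkq_append, mkq_append, mkq_pw, hz, hwx, hwy, mul_one,
          ← map_pow, ← map_mul, ← map_mul]
      · rw [mkq_append, mkq_append, mkq_pw, hz, hwy, hwx, mul_one,
          ← map_pow, ← map_mul, ← map_mul]
      · exact trace_ne_swap hirr hsym hxy hnI _ _
    · have hzl : (ppr z).length < (npr z).length := by omega
      -- right padding
      set R := kd (wx ++ wy) + kd (wy ++ wx) + (ppr (wx ++ wy)).length + 1 with hR
      have hlen1 : (ppr (wy ++ wx)).length = (ppr (wx ++ wy)).length := by
        rw [hu']
      have hk₁ : kd ((wx ++ wy) ++ pw R z) =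
          (kd (pw R z) + (npr (wx ++ wy)).length) - (ppr (wx ++ wy)).length :=
        padR hzl _ (by omega) (by omega)
      have hk₂ : kd ((wy ++ wx) ++ pw R z) =
          (kd (pw R z) + (npr (wy ++ wx)).length) - (ppr (wy ++ wx)).length :=
        padR hzl _ (by omega) (by omega)
      have hQ : QEquiv A ((wx ++ wy) ++ pw R z) ((wy ++ wx) ++ pw R z) := by
        apply qequiv_of
        · simp only [ppr_append]; rw [hu]
        · simp only [npr_append]; rw [hv]
        · intro j _; rw [hk₁, hk₂, hu', hv']
      refine collision η hη ?_ ?_ hQ ?_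
        (T₁ := 1 * (mkt I x * mkt I y) * ζ ^ R) (T₂ := 1 * (mkt I y * mkt I x) * ζ ^ R)
      · rw [mkq_append, mkq_append, mkq_pw, hz, hwx, hwy, one_mul,
          ← map_pow, ← map_mul, ← map_mul]
      · rw [mkq_append, mkq_append, mkq_pw, hz, hwy, hwx, one_mul,
          ← map_pow, ← map_mul, ← map_mul]
      · exact trace_ne_swap hirr hsym hxy hnI _ _
  · have hQ : QEquiv A (wx ++ wy) (wy ++ wx) := by
      apply qequiv_of hu' hv'
      intro j _; rw [heq]
    refine collision η hη ?_ ?_ hQ ?_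
      (T₁ := 1 * (mkt I x * mkt I y) * 1) (T₂ := 1 * (mkt I y * mkt I x) * 1)
    · rw [mkq_append, hwx, hwy, one_mul, mul_one, ← map_mul]
    · rw [mkq_append, hwy, hwx, one_mul, mul_one, ← map_mul]
    · exact trace_ne_swap hirr hsym hxy hnI _ _

lemma fail_mid {α : Type} {p q r : List α} (hpq : p ++ q = q ++ p) (hqr : q ++ r = r ++ q)
    (hfail : ¬(p ++ r = r ++ p)) : q = [] ∧ p ≠ [] ∧ r ≠ [] := by
  refine ⟨?_, ?_, ?_⟩
  · by_contra hq
    exact hfail (comm_trans (p.length + r.length) p r q le_rfl hq hpq hqr.symm)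
  · rintro rfl; simp at hfail
  · rintro rfl; simp at hfail

end Cases


section BigPN

variable {Γ A : Type} [DecidableEq A] {I : Γ → Γ → Prop}

/-- The hard case: middle types (P, N). -/
lemma case_PN (η : TraceMonoid I →* QueueMonoid A) (hη : Function.Injective η)
    (hirr : ∀ a, ¬ I a a) (hsym : ∀ a b, I a b → I b a)
    {a b c d : Γ} (had : a ≠ d) (hnIad : ¬ I a d)
    (hba : b ≠ a) (hbd : b ≠ d) (hca : c ≠ a) (hcd : c ≠ d)
    {wa wb wc wd : List (A ⊕ A)}
    (hwa : mkq wa = η (mkt I a)) (hwb : mkq wb = η (mkt I b))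
    (hwc : mkq wc = η (mkt I c)) (hwd : mkq wd = η (mkt I d))
    (hu_ab : ppr wa ++ ppr wb = ppr wb ++ ppr wa)
    (hv_cd : npr wc ++ npr wd = npr wd ++ npr wc)
    (hub : ppr wb ≠ []) (hvb : npr wb = []) (huc : ppr wc = []) (hvc : npr wc ≠ []) :
    False := by
  have hmb : 1 ≤ (ppr wb).length := List.length_pos_iff.mpr hub
  -- balance the positive projections of a against b
  obtain ⟨Ae, Be, hBe, hU⟩ : ∃ Ae Be, 1 ≤ Be ∧ pw Be (ppr wa) = pw Ae (ppr wb) := by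
    by_cases ha : ppr wa = []
    · exact ⟨0, 1, le_rfl, by simp [ha, pw]⟩
    · refine ⟨(ppr wa).length, (ppr wb).length, hmb, ?_⟩
      apply eqlen_comm hub (comm_pw_left hu_ab _) (comm_pw_left rfl _)
      rw [pw_length, pw_length, Nat.mul_comm]
  -- balance the negative projections of d against c
  obtain ⟨Ce, De, hDe, hV⟩ : ∃ Ce De, 1 ≤ De ∧ pw De (npr wd) = pw Ce (npr wc) := by
    by_cases hd : npr wd = []
    · exact ⟨0, 1, le_rfl, by simp [hd, pw]⟩
    · refine ⟨(npr wd).length, (npr wc).length, List.length_pos_iff.mpr hvc, ?_⟩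
      apply eqlen_comm hvc (comm_pw_left hv_cd.symm _) (comm_pw_left rfl _)
      rw [pw_length, pw_length, Nat.mul_comm]
  set R₁ : List (A ⊕ A) := pw De wd ++ (pw Be wa ++ pw Ce wc) with hR₁
  set R₂ : List (A ⊕ A) := pw Ce wc ++ (pw Be wa ++ (pw De wd ++ pw Ae wb)) with hR₂
  set X : ℕ := kd R₁ + kd R₂ with hX
  set W₁ : List (A ⊕ A) := pw (X + Ae) wb ++ R₁ with hW₁
  set W₂ : List (A ⊕ A) := pw X wb ++ R₂ with hW₂
  have hu : ppr W₁ = ppr W₂ := by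
    rw [hW₁, hW₂, hR₁, hR₂]
    simp only [ppr_append, ppr_pw, huc, pw_nil, List.append_nil, List.nil_append, hU,
      pw_add, List.append_assoc]
  have hv : npr W₁ = npr W₂ := by
    rw [hW₁, hW₂, hR₁, hR₂]
    simp only [npr_append, npr_pw, hvb, pw_nil, List.append_nil, List.nil_append, hV,
      pw_add, List.append_assoc]
  have hknil : ∀ t : ℕ, kd (pw t wb) = 0 := kd_pw_writer hvb
  have hnprb : ∀ t : ℕ, (npr (pw t wb)).length = 0 := by
    intro t; rw [npr_pw, hvb, pw_nil]; rfl
  have hpprb : ∀ t : ℕ, (ppr (pw t wb)).length = t * (ppr wb).length := by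
    intro t; rw [ppr_pw, pw_length]
  have hk₁ : kd W₁ = 0 := by
    rw [hW₁, kd_append, hknil, hnprb, hpprb]
    have : X + Ae ≤ (X + Ae) * (ppr wb).length := Nat.le_mul_of_pos_right _ hmb
    omega
  have hk₂ : kd W₂ = 0 := by
    rw [hW₂, kd_append, hknil, hnprb, hpprb]
    have : X ≤ X * (ppr wb).length := Nat.le_mul_of_pos_right _ hmb
    omega
  have hQ : QEquiv A W₁ W₂ := by
    apply qequiv_of hu hv
    intro j _; rw [hk₁, hk₂]
  refine collision η hη ?_ ?_ hQ ?_
    (T₁ := (mkt I b) ^ (X + Ae) * ((mkt I d) ^ De * ((mkt I a) ^ Be * (mkt I c) ^ Ce)))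
    (T₂ := (mkt I b) ^ X * ((mkt I c) ^ Ce * ((mkt I a) ^ Be * ((mkt I d) ^ De * (mkt I b) ^ Ae))))
  · rw [hW₁, hR₁, mkq_append, mkq_append, mkq_append, mkq_pw, mkq_pw, mkq_pw, mkq_pw,
      hwa, hwb, hwc, hwd, ← map_pow, ← map_pow, ← map_pow, ← map_pow, ← map_mul, ← map_mul,
      ← map_mul]
  · rw [hW₂, hR₂, mkq_append, mkq_append, mkq_append, mkq_append, mkq_pw, mkq_pw, mkq_pw,
      mkq_pw, mkq_pw, hwa, hwb, hwc, hwd, ← map_pow, ← map_pow, ← map_pow, ← map_pow,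
      ← map_pow, ← map_mul, ← map_mul, ← map_mul, ← map_mul]
  · intro h
    have h2 := congrArg (fun T => FreeMonoid.toList (projT hirr hsym hnIad T)) h
    simp only [map_mul, map_pow] at h2
    rw [projT_mkt hirr hsym hnIad a, projT_mkt hirr hsym hnIad b,
      projT_mkt hirr hsym hnIad c, projT_mkt hirr hsym hnIad d] at h2
    rw [if_pos rfl, if_neg hba, if_neg hbd, if_neg hca, if_neg hcd,
      if_neg (Ne.symm had), if_pos rfl] at h2
    have hone : FreeMonoid.ofList ([] : List Bool) = 1 := rfl
    simp only [hone, one_pow, one_mul, mul_one, FreeMonoid.toList_mul, toList_pow,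
      FreeMonoid.toList_ofList] at h2
    obtain ⟨D', hD'⟩ : ∃ D', De = D' + 1 := ⟨De - 1, by omega⟩
    obtain ⟨B', hB'⟩ : ∃ B', Be = B' + 1 := ⟨Be - 1, by omega⟩
    rw [hD', hB', pw_succ, pw_succ] at h2
    simp at h2

end BigPN

end QInfra

open QInfra in
/-- If the trace monoid of `(Γ, I)` embeds into the queue monoid, then the graph
`(Γ, I)` contains no induced path `P₄`. -/
theorem stmt13 (Γ A : Type) [DecidableEq A] (I : Γ → Γ → Prop)
    (hirr : ∀ a, ¬ I a a) (hsym : ∀ a b, I a b → I b a)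
    (η : TraceMonoid I →* QueueMonoid A) (hη : Function.Injective η) :
    ¬ ∃ a b c d : Γ, a ≠ b ∧ a ≠ c ∧ a ≠ d ∧ b ≠ c ∧ b ≠ d ∧ c ≠ d ∧
      I a b ∧ I b c ∧ I c d ∧ ¬ I a c ∧ ¬ I b d ∧ ¬ I a d := by
  rintro ⟨a, b, c, d, hab, hac, had, hbc, hbd, hcd, Iab, Ibc, Icd, nIac, nIbd, nIad⟩
  obtain ⟨za, hza⟩ := Con.mk'_surjective (η (mkt I a))
  obtain ⟨zb, hzb⟩ := Con.mk'_surjective (η (mkt I b))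
  obtain ⟨zc, hzc⟩ := Con.mk'_surjective (η (mkt I c))
  obtain ⟨zd, hzd⟩ := Con.mk'_surjective (η (mkt I d))
  set wa := FreeMonoid.toList za with hwa'
  set wb := FreeMonoid.toList zb with hwb'
  set wc := FreeMonoid.toList zc with hwc'
  set wd := FreeMonoid.toList zd with hwd'
  have hwa : mkq wa = η (mkt I a) := by
    unfold mkq; rw [hwa', FreeMonoid.ofList_toList]; exact hza
  have hwb : mkq wb = η (mkt I b) := by
    unfold mkq; rw [hwb', FreeMonoid.ofList_toList]; exact hzb
  have hwc : mkq wc = η (mkt I c) := by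
    unfold mkq; rw [hwc', FreeMonoid.ofList_toList]; exact hzc
  have hwd : mkq wd = η (mkt I d) := by
    unfold mkq; rw [hwd', FreeMonoid.ofList_toList]; exact hzd
  have Eab := comm_facts (edge_qequiv η Iab hwa hwb)
  have Ebc := comm_facts (edge_qequiv η Ibc hwb hwc)
  have Ecd := comm_facts (edge_qequiv η Icd hwc hwd)
  have hu_ab : ppr wa ++ ppr wb = ppr wb ++ ppr wa := by
    have := Eab.1; simp only [ppr_append] at this; exact this.symm
  have hv_ab : npr wa ++ npr wb = npr wb ++ npr wa := by
    have := Eab.2.1; simp only [npr_append] at this; exact this.symm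
  have hu_bc : ppr wb ++ ppr wc = ppr wc ++ ppr wb := by
    have := Ebc.1; simp only [ppr_append] at this; exact this.symm
  have hv_bc : npr wb ++ npr wc = npr wc ++ npr wb := by
    have := Ebc.2.1; simp only [npr_append] at this; exact this.symm
  have hu_cd : ppr wc ++ ppr wd = ppr wd ++ ppr wc := by
    have := Ecd.1; simp only [ppr_append] at this; exact this.symm
  have hv_cd : npr wc ++ npr wd = npr wd ++ npr wc := by
    have := Ecd.2.1; simp only [npr_append] at this; exact this.symm
  have hbal_kd : ∀ (u v : List (A ⊕ A)), (npr u).length = (ppr u).length →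
      (npr v).length = (ppr v).length → kd (u ++ v) = kd (v ++ u) := by
    intro u v h1 h2; rw [kd_append, kd_append]; omega
  have hpadBD : (∃ z ζ, mkq z = η ζ ∧ (npr z).length ≠ (ppr z).length) ∨
      kd (wb ++ wd) = kd (wd ++ wb) := by
    by_cases h2 : (npr wb).length = (ppr wb).length
    · by_cases h4 : (npr wd).length = (ppr wd).length
      · exact Or.inr (hbal_kd _ _ h2 h4)
      · exact Or.inl ⟨wd, _, hwd, h4⟩
    · exact Or.inl ⟨wb, _, hwb, h2⟩
  have hpadAC : (∃ z ζ, mkq z = η ζ ∧ (npr z).length ≠ (ppr z).length) ∨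
      kd (wa ++ wc) = kd (wc ++ wa) := by
    by_cases h2 : (npr wa).length = (ppr wa).length
    · by_cases h4 : (npr wc).length = (ppr wc).length
      · exact Or.inr (hbal_kd _ _ h2 h4)
      · exact Or.inl ⟨wc, _, hwc, h4⟩
    · exact Or.inl ⟨wa, _, hwa, h2⟩
  by_cases hBDu : ppr wb ++ ppr wd = ppr wd ++ ppr wb
  · by_cases hBDv : npr wb ++ npr wd = npr wd ++ npr wb
    · -- swap collision on (b, d)
      exact case_swap η hη hirr hsym hbd nIbd hwb hwd hBDu hBDv hpadBD
    · have vbd := fail_mid hv_bc hv_cd hBDv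
      by_cases hACu : ppr wa ++ ppr wc = ppr wc ++ ppr wa
      · by_cases hACv : npr wa ++ npr wc = npr wc ++ npr wa
        · exact case_swap η hη hirr hsym hac nIac hwa hwc hACu hACv hpadAC
        · have vac := fail_mid hv_ab hv_bc hACv
          exact absurd vac.1 vbd.2.1
      · have uac := fail_mid hu_ab hu_bc hACu
        -- mirror big PN case with letters (d, c, b, a)
        exact case_PN η hη hirr hsym had.symm (fun h => nIad (hsym _ _ h))
          hcd hac.symm hbd hab.symm hwd hwc hwb hwa hu_cd.symm hv_ab.symm
          uac.2.2 vbd.1 uac.1 vbd.2.1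
  · have ubd := fail_mid hu_bc hu_cd hBDu
    by_cases hACu : ppr wa ++ ppr wc = ppr wc ++ ppr wa
    · by_cases hACv : npr wa ++ npr wc = npr wc ++ npr wa
      · exact case_swap η hη hirr hsym hac nIac hwa hwc hACu hACv hpadAC
      · have vac := fail_mid hv_ab hv_bc hACv
        -- direct big PN case
        exact case_PN η hη hirr hsym had nIad hab.symm hbd hac.symm hcd
          hwa hwb hwc hwd hu_ab hv_cd ubd.2.1 vac.1 ubd.1 vac.2.2
    · have uac := fail_mid hu_ab hu_bc hACu
      exact absurd uac.1 ubd.2.1
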